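/- For every non-negative integer k, every tournament T either contains k pairwise arc-disjoint cycles or has a feedback arc set of size at most (2k+1)(k-1). -/

import Mathlib

variable {V : Type*}

/-- A directed cycle in the digraph with arc relation `A`: a nonempty duplicate-free
list of at least two vertices such that every cyclically-consecutive pair is an arc. -/
structure DCycle (A : V → V → Prop) where
  verts : List V
  two_le : 2 ≤ verts.length
  nodup : verts.Nodup
  arcs_rel : ∀ p ∈ verts.zip (verts.rotate 1), A p.1 p.2

/-- The set of arcs of a cycle (cyclically consecutive pairs of its vertex list). -/
def DCycle.arcs {A : V → V → Prop} (c : DCycle A) : Set (V × V) :=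
  {p | p ∈ c.verts.zip (c.verts.rotate 1)}

/-- Two cycles are arc-disjoint if they share no arc. -/
def ArcDisjoint {A : V → V → Prop} (c₁ c₂ : DCycle A) : Prop :=
  Disjoint c₁.arcs c₂.arcs

/-- A tournament: irreflexive, and between any two distinct vertices exactly one arc. -/
def IsTournament (A : V → V → Prop) : Prop :=
  (∀ v, ¬ A v v) ∧ ∀ u v : V, u ≠ v → (A u v ↔ ¬ A v u)

/-- `F` is a feedback arc set of the digraph with arc relation `A`. -/
def IsFAS (A : V → V → Prop) (F : Set (V × V)) : Prop :=
  (∀ p ∈ F, A p.1 p.2) ∧ IsEmpty (DCycle (fun u v => A u v ∧ (u, v) ∉ F))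

set_option linter.unnecessarySeqFocus false
set_option linter.unusedSectionVars false

section Aux
variable {A : V → V → Prop}

lemma zip_rotate_length (l : List V) : (l.zip (l.rotate 1)).length = l.length := by
  simp [List.length_zip]

lemma mem_zip_rotate_iff {l : List V} {p : V × V} :
    p ∈ l.zip (l.rotate 1) ↔ ∃ i : ℕ, ∃ h : i < l.length,
      p = (l[i], l[(i + 1) % l.length]'(Nat.mod_lt _ (Nat.lt_of_le_of_lt (Nat.zero_le i) h))) := by
  constructor
  · intro hp
    obtain ⟨n, hn, he⟩ := List.mem_iff_getElem.mp hp
    rw [zip_rotate_length] at hn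
    refine ⟨n, hn, ?_⟩
    rw [← he, List.getElem_zip, List.getElem_rotate]
  · rintro ⟨i, h, rfl⟩
    apply List.mem_iff_getElem.mpr
    refine ⟨i, by rwa [zip_rotate_length], ?_⟩
    rw [List.getElem_zip, List.getElem_rotate]

lemma DCycle.length_pos (c : DCycle A) : 0 < c.verts.length :=
  Nat.lt_of_lt_of_le (by norm_num) c.two_le

/-- the `i % ℓ`-th vertex of a cycle -/
def cval (c : DCycle A) (i : ℕ) : V :=
  c.verts[i % c.verts.length]'(Nat.mod_lt _ c.length_pos)

lemma cval_inj (c : DCycle A) {i j : ℕ} :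
    cval c i = cval c j ↔ i % c.verts.length = j % c.verts.length := by
  rw [cval, cval, List.Nodup.getElem_inj_iff c.nodup]

lemma cval_add_len (c : DCycle A) (i : ℕ) : cval c (i + c.verts.length) = cval c i := by
  rw [cval_inj, Nat.add_mod_right]

lemma cval_arc (c : DCycle A) (i : ℕ) : A (cval c i) (cval c (i + 1)) := by
  have h := c.arcs_rel (cval c i, cval c (i + 1))
  apply h
  rw [mem_zip_rotate_iff]
  refine ⟨i % c.verts.length, Nat.mod_lt _ c.length_pos, ?_⟩
  have : (i % c.verts.length + 1) % c.verts.length = (i + 1) % c.verts.length := by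
    conv_rhs => rw [← Nat.mod_add_mod]
  simp only [cval, this]

/-- build a cycle from an index function -/
def mkCycle (n : ℕ) (hn : 2 ≤ n) (f : ℕ → V)
    (hinj : ∀ i < n, ∀ j < n, f i = f j → i = j)
    (harc : ∀ i < n, A (f i) (f ((i + 1) % n))) : DCycle A where
  verts := (List.range n).map f
  two_le := by simpa using hn
  nodup := List.Nodup.map_on
    (by intro x hx y hy hxy
        exact hinj x (by simpa using hx) y (by simpa using hy) hxy)
    List.nodup_range
  arcs_rel := by
    intro p hp
    rw [mem_zip_rotate_iff] at hp
    obtain ⟨i, h, rfl⟩ := hp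
    simp only [List.length_map, List.length_range] at h
    simp only [List.getElem_map, List.length_map, List.length_range, List.getElem_range]
    exact harc i h

lemma mkCycle_length (n : ℕ) (hn : 2 ≤ n) (f : ℕ → V) (hinj) (harc) :
    (mkCycle (A := A) n hn f hinj harc).verts.length = n := by
  simp [mkCycle]

end Aux

section Chord
variable {A : V → V → Prop}

lemma cval_shift_inj (c : DCycle A) (i : ℕ) {t t' : ℕ}
    (ht : t < c.verts.length) (ht' : t' < c.verts.length) :
    cval c (i + t) = cval c (i + t') ↔ t = t' := by
  rw [cval_inj]
  constructor
  · intro h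
    have h' : Nat.ModEq c.verts.length (i + t) (i + t') := h
    have := Nat.ModEq.add_left_cancel' i h'
    exact this.eq_of_lt_of_lt ht ht'
  · rintro rfl; rfl

lemma three_le (hA : ∀ u v, A u v → ¬ A v u) (c : DCycle A) : 3 ≤ c.verts.length := by
  by_contra h
  have h2 : c.verts.length = 2 := by have := c.two_le; omega
  have a1 := cval_arc c 0
  have a2 := cval_arc c 1
  have e : cval c (1 + 1) = cval c 0 := by rw [cval_inj, h2]
  rw [e] at a2
  exact hA _ _ a1 a2

lemma chord_lemma (c : DCycle A) (hmin : ∀ c' : DCycle A, c.verts.length ≤ c'.verts.length)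
    (i d : ℕ) (hd2 : 2 ≤ d) (hdl : d ≤ c.verts.length - 2) :
    ¬ A (cval c i) (cval c (i + d)) ∧ ¬ A (cval c (i + d)) (cval c i) := by
  have hL4 : 4 ≤ c.verts.length := by have := c.two_le; omega
  constructor
  · -- forward chord gives shortcut cycle of length L - d + 1
    intro hAf
    have hn2 : 2 ≤ c.verts.length - d + 1 := by omega
    have hoLt : ∀ j, j < c.verts.length - d + 1 →
        (if j = 0 then 0 else d + j - 1) < c.verts.length := by
      intro j hj; split <;> omega
    have hinj : ∀ a < c.verts.length - d + 1, ∀ b < c.verts.length - d + 1,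
        cval c (i + (if a = 0 then 0 else d + a - 1)) =
        cval c (i + (if b = 0 then 0 else d + b - 1)) → a = b := by
      intro a ha b hb hab
      have := (cval_shift_inj c i (hoLt a ha) (hoLt b hb)).mp hab
      split at this <;> split at this <;> omega
    have harc : ∀ j, j < c.verts.length - d + 1 →
        A (cval c (i + (if j = 0 then 0 else d + j - 1)))
          (cval c (i + (if (j + 1) % (c.verts.length - d + 1) = 0 then 0
            else d + (j + 1) % (c.verts.length - d + 1) - 1))) := by
      intro j hj
      rcases Nat.eq_zero_or_pos j with rfl | hjpos
      · have e2 : (0 + 1) % (c.verts.length - d + 1) = 1 := by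
          rw [Nat.mod_eq_of_lt] <;> omega
        rw [e2]
        simp only [if_pos rfl, if_neg (by omega : (1:ℕ) ≠ 0)]
        have e3 : d + 1 - 1 = d := by omega
        rw [e3]
        simpa using hAf
      · rcases Nat.lt_or_ge j (c.verts.length - d) with hlt | hge
        · have e2 : (j + 1) % (c.verts.length - d + 1) = j + 1 := by
            rw [Nat.mod_eq_of_lt] ; omega
          rw [e2, if_neg (by omega : j ≠ 0), if_neg (by omega : j + 1 ≠ 0)]
          have := cval_arc c (i + (d + j - 1))
          have e4 : i + (d + j - 1) + 1 = i + (d + (j + 1) - 1) := by omega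
          rwa [e4] at this
        · have hj1 : j = c.verts.length - d := by omega
          have e2 : (j + 1) % (c.verts.length - d + 1) = 0 := by
            rw [hj1]; simp
          rw [e2, if_pos rfl, if_neg (by omega : j ≠ 0)]
          have := cval_arc c (i + (d + j - 1))
          have e4 : i + (d + j - 1) + 1 = i + c.verts.length := by omega
          rw [e4, cval_add_len] at this
          simpa using this
    have := hmin (mkCycle (c.verts.length - d + 1) hn2 _ hinj harc)
    rw [mkCycle_length] at this
    omega
  · -- backward chord gives short cycle of length d + 1
    intro hAb
    have hn2 : 2 ≤ d + 1 := by omega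
    have hinj : ∀ a < d + 1, ∀ b < d + 1, cval c (i + a) = cval c (i + b) → a = b := by
      intro a ha b hb hab
      exact (cval_shift_inj c i (by omega) (by omega)).mp hab
    have harc : ∀ j, j < d + 1 → A (cval c (i + j)) (cval c (i + (j + 1) % (d + 1))) := by
      intro j hj
      rcases Nat.lt_or_ge j d with hlt | hge
      · have e2 : (j + 1) % (d + 1) = j + 1 := by rw [Nat.mod_eq_of_lt]; omega
        rw [e2]
        exact cval_arc c (i + j)
      · have hj1 : j = d := by omega
        have e2 : (j + 1) % (d + 1) = 0 := by rw [hj1]; simp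
        rw [e2, hj1]
        simpa using hAb
    have := hmin (mkCycle (d + 1) hn2 _ hinj harc)
    rw [mkCycle_length] at this
    omega

end Chord

section Step
variable {A : V → V → Prop}

lemma cval_ne (c : DCycle A) (i : ℕ) {d : ℕ} (hd1 : 1 ≤ d) (hdL : d < c.verts.length) :
    cval c i ≠ cval c (i + d) := by
  intro h
  rw [show cval c i = cval c (i + 0) by rw [add_zero]] at h
  have := (cval_shift_inj c i (c.length_pos) hdL).mp h
  omega

lemma step2 (hasym : ∀ u v : V, A u v → ¬ A v u)
    (htot : ∀ u v : V, u ≠ v → A u v ∨ A v u) (Fn : Finset (V × V)) :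
    IsEmpty (DCycle (fun u v => A u v ∧ (u, v) ∉ (↑Fn : Set (V × V)))) ∨
    ∃ c' : DCycle A, (∀ p ∈ c'.arcs, p ∉ (↑Fn : Set (V × V))) ∧
      c'.verts.length * (c'.verts.length - 3) ≤ 2 * Fn.card ∧ 3 ≤ c'.verts.length := by
  classical
  by_cases hne : Nonempty (DCycle (fun u v => A u v ∧ (u, v) ∉ (↑Fn : Set (V × V))))
  swap
  · exact Or.inl (not_nonempty_iff.mp hne)
  right
  set D := fun u v => A u v ∧ (u, v) ∉ (↑Fn : Set (V × V)) with hD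
  have hDA : ∀ u v, D u v → A u v := fun u v h => h.1
  have hDasym : ∀ u v, D u v → ¬ D v u := fun u v h h' => hasym u v h.1 h'.1
  have hP : ∃ n, ∃ c : DCycle D, c.verts.length = n := ⟨_, hne.some, rfl⟩
  obtain ⟨cmin, hlen⟩ := Nat.find_spec hP
  have hmin : ∀ c' : DCycle D, cmin.verts.length ≤ c'.verts.length := by
    intro c'
    rw [hlen]
    exact Nat.find_min' hP ⟨c', rfl⟩
  have hL3 : 3 ≤ cmin.verts.length := three_le hDasym cmin
  have hLpos := cmin.length_pos
  -- counting: every "chord" of cmin is an arc of Fn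
  have hcount : cmin.verts.length * (cmin.verts.length - 3) ≤ 2 * Fn.card := by
    have hcard1 : ((Finset.univ : Finset (Fin cmin.verts.length)) ×ˢ
        Finset.Icc 2 (cmin.verts.length - 2)).card = cmin.verts.length * (cmin.verts.length - 3) := by
      rw [Finset.card_product, Finset.card_univ, Fintype.card_fin, Nat.card_Icc,
        show cmin.verts.length - 2 + 1 - 2 = cmin.verts.length - 3 from by omega]
    have hcard2 : (Fn ×ˢ (Finset.univ : Finset Bool)).card = 2 * Fn.card := by
      rw [Finset.card_product, Finset.card_univ]
      simp [Fintype.card_bool, Nat.mul_comm]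
    rw [← hcard1, ← hcard2]
    apply Finset.card_le_card_of_injOn
      (fun p => if A (cval cmin p.1) (cval cmin (p.1 + p.2))
        then ((cval cmin p.1, cval cmin (p.1 + p.2)), true)
        else ((cval cmin (p.1 + p.2), cval cmin p.1), false))
    · rintro ⟨i, d⟩ hmem
      dsimp only
      rw [Finset.mem_coe, Finset.mem_product, Finset.mem_Icc] at hmem
      obtain ⟨-, hd2, hdU⟩ := hmem
      have hchord := chord_lemma cmin hmin i d hd2 hdU
      have hne' : cval cmin i ≠ cval cmin (↑i + d) :=
        cval_ne cmin i (by omega) (by omega)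
      have hnotD1 : ¬ D (cval cmin i) (cval cmin (↑i + d)) := hchord.1
      have hnotD2 : ¬ D (cval cmin (↑i + d)) (cval cmin i) := hchord.2
      by_cases hA1 : A (cval cmin i) (cval cmin (↑i + d))
      · rw [if_pos hA1, Finset.mem_coe, Finset.mem_product]
        refine ⟨?_, Finset.mem_univ _⟩
        by_contra hFn
        exact hnotD1 ⟨hA1, hFn⟩
      · rw [if_neg hA1, Finset.mem_coe, Finset.mem_product]
        refine ⟨?_, Finset.mem_univ _⟩
        have hA2 : A (cval cmin (↑i + d)) (cval cmin i) := (htot _ _ hne').resolve_left hA1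
        by_contra hFn
        exact hnotD2 ⟨hA2, hFn⟩
    · rintro ⟨i, d⟩ hmem ⟨i', d'⟩ hmem' heq
      dsimp only at heq
      simp only [Finset.coe_product, Set.mem_prod, Finset.mem_coe, Finset.mem_Icc,
        Finset.mem_univ, true_and] at hmem hmem'
      obtain ⟨hd2, hdU⟩ := hmem
      obtain ⟨hd2', hdU'⟩ := hmem'
      have hiL : (↑i : ℕ) < cmin.verts.length := i.isLt
      have hiL' : (↑i' : ℕ) < cmin.verts.length := i'.isLt
      have hfst : ∀ a b : ℕ, a < cmin.verts.length → b < cmin.verts.length →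
          cval cmin a = cval cmin b → a = b := by
        intro a b ha hb h
        have := (cval_inj cmin).mp h
        rwa [Nat.mod_eq_of_lt ha, Nat.mod_eq_of_lt hb] at this
      by_cases hA1 : A (cval cmin i) (cval cmin (↑i + d)) <;>
        by_cases hA1' : A (cval cmin i') (cval cmin (↑i' + d'))
      · rw [if_pos hA1, if_pos hA1', Prod.mk.injEq, Prod.mk.injEq] at heq
        obtain ⟨⟨h1, h2⟩, -⟩ := heq
        have hii : (↑i : ℕ) = ↑i' := hfst _ _ hiL hiL' h1
        have : d = d' := by
          rw [show (↑i' : ℕ) = ↑i from hii.symm] at h2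
          exact (cval_shift_inj cmin i (by omega) (by omega)).mp h2
        exact Prod.ext (Fin.ext hii) this
      · rw [if_pos hA1, if_neg hA1', Prod.mk.injEq] at heq
        exact absurd heq.2 (by simp)
      · rw [if_neg hA1, if_pos hA1', Prod.mk.injEq] at heq
        exact absurd heq.2 (by simp)
      · rw [if_neg hA1, if_neg hA1', Prod.mk.injEq, Prod.mk.injEq] at heq
        obtain ⟨⟨h2, h1⟩, -⟩ := heq
        have hii : (↑i : ℕ) = ↑i' := hfst _ _ hiL hiL' h1
        have : d = d' := by
          rw [show (↑i' : ℕ) = ↑i from hii.symm] at h2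
          exact (cval_shift_inj cmin i (by omega) (by omega)).mp h2
        exact Prod.ext (Fin.ext hii) this
  -- lift cmin to a cycle of A
  refine ⟨⟨cmin.verts, cmin.two_le, cmin.nodup, fun p hp => (cmin.arcs_rel p hp).1⟩, ?_, hcount, hL3⟩
  intro p hp
  exact (cmin.arcs_rel p hp).2

end Step

section Main
variable [Fintype V]

lemma key [Fintype V] (A : V → V → Prop) (hT : IsTournament A) (k : ℕ) :
    ∀ r, r ≤ k →
    (∃ c : Fin r → DCycle A, (∀ i j, i ≠ j → ArcDisjoint (c i) (c j)) ∧
       ∑ i, (c i).verts.length ≤ r * (r + 2)) ∨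
    (∃ F : Set (V × V), IsFAS A F ∧ F.ncard ≤ (2 * k + 1) * (k - 1)) := by
  classical
  have hasym : ∀ u v, A u v → ¬ A v u := by
    intro u v h h'
    by_cases he : u = v
    · exact hT.1 u (he ▸ h)
    · exact (hT.2 u v he).mp h h'
  have htot : ∀ u v : V, u ≠ v → A u v ∨ A v u := by
    intro u v h
    by_cases hA : A u v
    · exact Or.inl hA
    · exact Or.inr ((hT.2 v u (Ne.symm h)).mpr hA)
  intro r
  induction r with
  | zero => intro _; left; exact ⟨Fin.elim0, fun i => i.elim0, by simp⟩
  | succ r ih =>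
    intro hrk
    rcases ih (by omega) with ⟨c, hdisj, hsum⟩ | hFAS
    swap
    · exact Or.inr hFAS
    have hk1 : 1 ≤ k := by omega
    have hrk1 : r ≤ k - 1 := by omega
    -- the union of the arcs of the chosen cycles
    have hcardF : (Finset.univ.biUnion
        (fun m : Fin r => ((c m).verts.zip ((c m).verts.rotate 1)).toFinset)).card
        ≤ r * (r + 2) := by
      calc (Finset.univ.biUnion
            (fun m : Fin r => ((c m).verts.zip ((c m).verts.rotate 1)).toFinset)).card
          ≤ ∑ m : Fin r, ((c m).verts.zip ((c m).verts.rotate 1)).toFinset.card :=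
            Finset.card_biUnion_le
        _ ≤ ∑ m : Fin r, (c m).verts.length := by
            apply Finset.sum_le_sum
            intro m _
            calc ((c m).verts.zip ((c m).verts.rotate 1)).toFinset.card
                ≤ ((c m).verts.zip ((c m).verts.rotate 1)).length := List.toFinset_card_le _
              _ = (c m).verts.length := zip_rotate_length _
        _ ≤ r * (r + 2) := hsum
    have hsub : ∀ m : Fin r, (c m).arcs ⊆ (↑(Finset.univ.biUnion
        (fun m : Fin r => ((c m).verts.zip ((c m).verts.rotate 1)).toFinset)) : Set (V × V)) := by
      intro m p hp
      rw [Finset.mem_coe, Finset.mem_biUnion]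
      exact ⟨m, Finset.mem_univ m, List.mem_toFinset.mpr hp⟩
    rcases step2 hasym htot (Finset.univ.biUnion
        (fun m : Fin r => ((c m).verts.zip ((c m).verts.rotate 1)).toFinset)) with hempty | hc'
    · -- feedback arc set
      right
      refine ⟨_, ⟨?_, hempty⟩, ?_⟩
      · intro p hp
        rw [Finset.mem_coe, Finset.mem_biUnion] at hp
        obtain ⟨m, -, hm⟩ := hp
        exact (c m).arcs_rel p (List.mem_toFinset.mp hm)
      · rw [Set.ncard_coe_finset]
        calc _ ≤ r * (r + 2) := hcardF
          _ ≤ (2 * k + 1) * (k - 1) := by nlinarith [hrk1, hk1, Nat.sub_add_cancel hk1]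
    · -- extend the family
      obtain ⟨c', hc'F, hc'len, hc'3⟩ := hc'
      left
      have hlen' : c'.verts.length ≤ 2 * r + 3 := by
        obtain ⟨t, ht⟩ : ∃ t, c'.verts.length = t + 3 := ⟨c'.verts.length - 3, by omega⟩
        rw [ht] at hc'len
        have h2 : (t + 3) * t ≤ 2 * (r * (r + 2)) := by
          calc (t + 3) * t ≤ 2 * (Finset.univ.biUnion
              (fun m : Fin r => ((c m).verts.zip ((c m).verts.rotate 1)).toFinset)).card := by
                simpa using hc'len
            _ ≤ 2 * (r * (r + 2)) := by omega
        nlinarith [h2]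
      refine ⟨Fin.snoc c c', ?_, ?_⟩
      · intro i j hij
        rcases Fin.eq_castSucc_or_eq_last i with ⟨i', rfl⟩ | rfl <;>
          rcases Fin.eq_castSucc_or_eq_last j with ⟨j', rfl⟩ | rfl
        · rw [Fin.snoc_castSucc, Fin.snoc_castSucc]
          exact hdisj i' j' (fun h => hij (by rw [h]))
        · rw [Fin.snoc_castSucc, Fin.snoc_last]
          exact Set.disjoint_right.mpr (fun {p} hp hpj => hc'F p hp (hsub i' hpj))
        · rw [Fin.snoc_castSucc, Fin.snoc_last]
          exact Set.disjoint_left.mpr (fun {p} hp hpj => hc'F p hp (hsub j' hpj))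
        · exact absurd rfl hij
      · rw [Fin.sum_univ_castSucc]
        simp only [Fin.snoc_castSucc, Fin.snoc_last]
        have : (r + 1) * (r + 1 + 2) = r * (r + 2) + (2 * r + 3) := by ring
        omega

end Main

/-- Every tournament either contains `k` arc-disjoint cycles or has a feedback arc
set of size at most `(2k+1)(k-1)`. -/
theorem stmt3 [Fintype V] (A : V → V → Prop) (hT : IsTournament A) (k : ℕ) :
    (∃ c : Fin k → DCycle A, ∀ i j, i ≠ j → ArcDisjoint (c i) (c j)) ∨
    (∃ F : Set (V × V), IsFAS A F ∧ F.ncard ≤ (2 * k + 1) * (k - 1)) := by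
  rcases key A hT k k le_rfl with ⟨c, hdisj, -⟩ | hFAS
  · exact Or.inl ⟨c, hdisj⟩
  · exact Or.inr hFAS
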